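/- Let d ≥ 1, let p, q be coprime integers with q > p ≥ 1, and suppose N ≥ (q-1)(d-1). Then there exist nonnegative vectors u_1, ..., u_N in ℝ^d such that every index set I ⊆ {1,...,N} satisfying ∑_{i ∈ I} u_i ⪰ (p/q) ∑_{i=1}^N u_i has |I| ≥ (d-1) + ⌈(pN - d + 1)/q⌉. -/

import Mathlib

theorem stmt_1 (N d p q : ℕ) (hd : 1 ≤ d) (hp : 1 ≤ p) (hpq : p < q)
    (hcop : Nat.Coprime p q) (hN : (q - 1) * (d - 1) ≤ N) :
    ∃ u : Fin N → Fin d → ℝ, (∀ i j, 0 ≤ u i j) ∧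
      ∀ I : Finset (Fin N),
        (∀ j, (p / q : ℝ) * ∑ i, u i j ≤ ∑ i ∈ I, u i j) →
        (d - 1 : ℤ) + ⌈((p * N - d + 1 : ℚ) / q)⌉ ≤ I.card := by
  classical
  have hq2 : 2 ≤ q := by omega
  haveI : NeZero q := ⟨by omega⟩
  -- r : inverse of p mod q
  set pu : (ZMod q)ˣ := ZMod.unitOfCoprime p hcop with hpu
  set r : ℕ := ((pu⁻¹ : (ZMod q)ˣ) : ZMod q).val with hrdef
  have hrq : r < q := ZMod.val_lt _
  have hprZ : ((p * r : ℕ) : ZMod q) = ((1 : ℕ) : ZMod q) := by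
    have hpcast : (p : ZMod q) = (pu : ZMod q) := (ZMod.coe_unitOfCoprime p hcop).symm
    push_cast
    rw [hrdef, ZMod.natCast_val, ZMod.cast_id, hpcast]
    exact Units.mul_inv pu
  have hpr : p * r % q = 1 := by
    have := (ZMod.natCast_eq_natCast_iff _ _ _).1 hprZ
    have h1 : 1 % q = 1 := Nat.mod_eq_of_lt (by omega)
    unfold Nat.ModEq at this
    omega
  have hr1 : 1 ≤ r := by
    rcases Nat.eq_zero_or_pos r with h | h
    · rw [h, Nat.mul_zero, Nat.zero_mod] at hpr; omega
    · exact h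
  set s := d - 1 with hs
  have hrs : r * s ≤ N := le_trans (Nat.mul_le_mul (by omega) (le_refl s)) hN
  -- the grouping function
  let g : Fin N → Fin d := fun i =>
    if h : (i : ℕ) < r * s then
      ⟨(i : ℕ) / r, by
        have h2 : (i : ℕ) / r < s := Nat.div_lt_of_lt_mul h
        omega⟩
    else ⟨d - 1, by omega⟩
  refine ⟨fun i j => if g i = j then 1 else 0, fun i j => by
    dsimp only; split <;> norm_num, ?_⟩
  intro I hI
  have hq0 : (0 : ℝ) < q := by exact_mod_cast (by omega : 0 < q)
  -- key inequality per fiber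
  have key : ∀ j : Fin d,
      p * (Finset.univ.filter fun i => g i = j).card
        ≤ q * (I.filter fun i => g i = j).card := by
    intro j
    have h := hI j
    rw [Finset.sum_boole, Finset.sum_boole] at h
    rw [div_mul_eq_mul_div, div_le_iff₀ hq0] at h
    have : (p : ℝ) * (Finset.univ.filter fun i => g i = j).card
        ≤ (q : ℝ) * (I.filter fun i => g i = j).card := by
      push_cast at h ⊢
      linarith
    exact_mod_cast this
  -- fiber size lower bounds
  have fib1 : ∀ j : Fin d, (j : ℕ) < s →
      r ≤ (Finset.univ.filter fun i => g i = j).card := by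
    intro j hj
    have hbound : ∀ k : Fin r, (j : ℕ) * r + (k : ℕ) < r * s := by
      intro k
      calc (j : ℕ) * r + (k : ℕ) < (j : ℕ) * r + r := by omega
        _ = ((j : ℕ) + 1) * r := by ring
        _ ≤ s * r := Nat.mul_le_mul_right r (by omega)
        _ = r * s := mul_comm s r
    have hcard := Finset.card_le_card_of_injOn
      (f := fun k : Fin r => (⟨(j : ℕ) * r + (k : ℕ), by
        have := hbound k; omega⟩ : Fin N))
      (s := Finset.univ) (t := Finset.univ.filter fun i => g i = j)
      (by
        intro k _
        rw [Finset.mem_coe, Finset.mem_filter]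
        refine ⟨Finset.mem_univ _, ?_⟩
        show g _ = j
        simp only [g]
        rw [dif_pos (hbound k)]
        apply Fin.ext
        show ((j : ℕ) * r + (k : ℕ)) / r = (j : ℕ)
        rw [mul_comm (j : ℕ) r, Nat.mul_add_div (by omega : 0 < r),
          Nat.div_eq_of_lt k.2]
        omega
      )
      (by
        intro k1 _ k2 _ hk
        apply Fin.ext
        have h2 : (j : ℕ) * r + (k1 : ℕ) = (j : ℕ) * r + (k2 : ℕ) :=
          congrArg Fin.val hk
        omega)
    simpa using hcard
  set jd : Fin d := ⟨d - 1, by omega⟩ with hjd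
  have fib2 : N - r * s ≤ (Finset.univ.filter fun i => g i = jd).card := by
    have hcard := Finset.card_le_card_of_injOn
      (f := fun k : Fin (N - r * s) => (⟨r * s + (k : ℕ), by
        have := k.2; omega⟩ : Fin N))
      (s := Finset.univ) (t := Finset.univ.filter fun i => g i = jd)
      (by
        intro k _
        rw [Finset.mem_coe, Finset.mem_filter]
        refine ⟨Finset.mem_univ _, ?_⟩
        show g _ = jd
        simp only [g]
        rw [dif_neg (by omega : ¬ (r * s + (k : ℕ) < r * s))]
      )
      (by
        intro k1 _ k2 _ hk
        apply Fin.ext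
        have h2 : r * s + (k1 : ℕ) = r * s + (k2 : ℕ) := congrArg Fin.val hk
        omega)
    simpa using hcard
  -- t := (p*r - 1)/q, exact
  have hprt : p * r = q * ((p * r - 1) / q) + 1 := by
    have h := Nat.div_add_mod (p * r) q
    have hsub : p * r - 1 = q * (p * r / q) := by omega
    rw [hsub, Nat.mul_div_cancel_left _ (by omega : 0 < q)]
    omega
  set t := (p * r - 1) / q with htdef
  -- lower bounds for fiber intersections with I
  have hmj : ∀ j : Fin d, (j : ℕ) < s →
      t + 1 ≤ (I.filter fun i => g i = j).card := by
    intro j hj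
    have h1 := key j
    have h2 := fib1 j hj
    have h3 : q * t < q * (I.filter fun i => g i = j).card := by
      calc q * t < q * t + 1 := by omega
        _ = p * r := hprt.symm
        _ ≤ p * (Finset.univ.filter fun i => g i = j).card :=
            Nat.mul_le_mul_left p h2
        _ ≤ _ := h1
    have := Nat.lt_of_mul_lt_mul_left h3
    omega
  set mlast := (I.filter fun i => g i = jd).card with hml
  have hmlast : p * (N - r * s) ≤ q * mlast := by
    calc p * (N - r * s) ≤ p * (Finset.univ.filter fun i => g i = jd).card :=
          Nat.mul_le_mul_left p fib2
      _ ≤ q * mlast := key jd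
  -- total count
  have hsum : I.card = ∑ j : Fin d, (I.filter fun i => g i = j).card :=
    Finset.card_eq_sum_card_fiberwise (fun i _ => Finset.mem_univ (g i))
  have hsplit : (∑ j ∈ Finset.univ.erase jd, (I.filter fun i => g i = j).card)
      + mlast = ∑ j : Fin d, (I.filter fun i => g i = j).card :=
    Finset.sum_erase_add _ _ (Finset.mem_univ jd)
  have hcard_erase : (Finset.univ.erase jd).card = s := by
    rw [Finset.card_erase_of_mem (Finset.mem_univ jd), Finset.card_univ,
      Fintype.card_fin]
  have hbig : s * (t + 1) ≤ ∑ j ∈ Finset.univ.erase jd,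
      (I.filter fun i => g i = j).card := by
    have h := Finset.card_nsmul_le_sum (Finset.univ.erase jd)
      (fun j => (I.filter fun i => g i = j).card) (t + 1)
      (by
        intro j hjm
        have hjne : j ≠ jd := (Finset.mem_erase.1 hjm).1
        have hjv : (j : ℕ) < s := by
          have : (j : ℕ) ≠ d - 1 := fun hc => hjne (Fin.ext (by simp [hjd, hc]))
          have := j.2
          omega
        exact hmj j hjv)
    rwa [smul_eq_mul, hcard_erase] at h
  have hC : s * (t + 1) + mlast ≤ I.card := by
    rw [hsum, ← hsplit]
    omega
  -- final arithmetic
  have hqQ : (0 : ℚ) < q := by exact_mod_cast (by omega : 0 < q)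
  have hceil : ⌈((p * N - d + 1 : ℚ) / q)⌉ ≤ (I.card : ℤ) - ((d : ℤ) - 1) := by
    rw [Int.ceil_le, div_le_iff₀ hqQ]
    have h1 : ((s * (t + 1) + mlast : ℕ) : ℚ) ≤ (I.card : ℚ) := by
      exact_mod_cast hC
    have h2 : ((p * (N - r * s) : ℕ) : ℚ) ≤ ((q * mlast : ℕ) : ℚ) := by
      exact_mod_cast hmlast
    have h3 : ((p * r : ℕ) : ℚ) = ((q * t + 1 : ℕ) : ℚ) := by exact_mod_cast hprt
    have hsQ : ((s : ℕ) : ℚ) = (d : ℚ) - 1 := by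
      rw [hs]
      push_cast [Nat.cast_sub hd]
      ring
    push_cast [Nat.cast_sub hrs] at h1 h2 h3
    have hqt' : (q : ℚ) * t = (p : ℚ) * r - 1 := by linarith
    have h4 : (s : ℚ) * ((q : ℚ) * t) = (s : ℚ) * ((p : ℚ) * r - 1) := by
      rw [hqt']
    have h5 : ((s : ℚ) * (t + 1) + mlast) * q ≤ (I.card : ℚ) * q :=
      mul_le_mul_of_nonneg_right h1 (le_of_lt hqQ)
    push_cast
    nlinarith [h2, h4, h5, hsQ]
  omega
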